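/- Let F be an orientation-preserving homeomorphism of ℝ with F(x+1) = F(x) + d, d ≥ 2, such that F is C^1 and F'(x) ≥ λ > 1 for all x. Then the operator Lφ = F^{-1} ∘ φ ∘ G (for G a homeomorphism with G(x+1)=G(x)+d) has a unique fixed point H in the space of continuous functions with H(x+1) = H(x) + 1, and H satisfies F ∘ H = H ∘ G. -/

import Mathlib

open scoped BoundedContinuousFunction

/-- A continuous 1-periodic real function is bounded. -/
lemma periodic_bounded {f : ℝ → ℝ} (hc : Continuous f) (hp : ∀ x, f (x + 1) = f x) :
    ∃ C, 0 ≤ C ∧ ∀ x, |f x| ≤ C := by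
  have hper : Function.Periodic f 1 := hp
  obtain ⟨z, hz, hmax⟩ := (isCompact_Icc (a := (0:ℝ)) (b := 1)).exists_isMaxOn
    (Set.nonempty_Icc.2 zero_le_one) (hc.abs.continuousOn)
  refine ⟨|f z|, abs_nonneg _, fun x => ?_⟩
  have h1 : f (Int.fract x) = f x := by
    have h := hper.sub_int_mul_eq (x := x) (n := ⌊x⌋)
    rw [mul_one] at h
    exact h
  have h2 : Int.fract x ∈ Set.Icc (0:ℝ) 1 :=
    ⟨Int.fract_nonneg x, (Int.fract_lt_one x).le⟩
  calc |f x| = |f (Int.fract x)| := by rw [h1]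
    _ ≤ |f z| := hmax h2

theorem stmt_1 (d : ℤ) (hd : 2 ≤ d) (lam : ℝ) (hlam : 1 < lam)
    (F Finv G : ℝ → ℝ)
    (hFcont : Continuous F) (hFmono : StrictMono F)
    (hFper : ∀ x, F (x + 1) = F x + d)
    (hFinv₁ : ∀ x, Finv (F x) = x) (hFinv₂ : ∀ x, F (Finv x) = x)
    (hFderiv : ∀ x : ℝ, ∃ D : ℝ, HasDerivAt F D x ∧ lam ≤ D)
    (hGcont : Continuous G) (hGmono : StrictMono G)
    (hGper : ∀ x, G (x + 1) = G x + d) :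
    (∃! H : ℝ → ℝ, Continuous H ∧ (∀ x, H (x + 1) = H x + 1) ∧
        ∀ x, Finv (H (G x)) = H x) ∧
    (∀ H : ℝ → ℝ, Continuous H → (∀ x, H (x + 1) = H x + 1) →
        (∀ x, Finv (H (G x)) = H x) → ∀ x, F (H x) = H (G x)) := by
  have hlam0 : (0:ℝ) < lam := lt_trans one_pos hlam
  -- expansion property of F
  have hexp : ∀ a b : ℝ, lam * |a - b| ≤ |F a - F b| := by
    have hmono : Monotone (fun x => F x - lam * x) := by
      apply monotone_of_deriv_nonneg
      · intro x
        obtain ⟨D, hD, _⟩ := hFderiv x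
        exact (hD.sub ((hasDerivAt_id x).const_mul lam)).differentiableAt
      · intro x
        obtain ⟨D, hD, hDlam⟩ := hFderiv x
        have : HasDerivAt (fun x => F x - lam * x) (D - lam * 1) x :=
          hD.sub ((hasDerivAt_id x).const_mul lam)
        rw [this.deriv]
        linarith
    have key : ∀ a b : ℝ, a ≤ b → lam * (b - a) ≤ F b - F a := by
      intro a b hab
      have := hmono hab
      simp only at this
      nlinarith
    intro a b
    rcases le_total a b with h | h
    · rw [abs_sub_comm, abs_of_nonneg (sub_nonneg.2 h),
        abs_sub_comm, abs_of_nonneg (sub_nonneg.2 (hFmono.monotone h))]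
      exact key a b h
    · rw [abs_of_nonneg (sub_nonneg.2 h), abs_of_nonneg (sub_nonneg.2 (hFmono.monotone h))]
      exact key b a h
  -- Finv is Lipschitz with constant 1/λ
  have hFinvLip : ∀ u v : ℝ, |Finv u - Finv v| ≤ lam⁻¹ * |u - v| := by
    intro u v
    have := hexp (Finv u) (Finv v)
    rw [hFinv₂, hFinv₂] at this
    rw [le_inv_mul_iff₀ hlam0]
    exact this
  have hFinvCont : Continuous Finv := by
    apply LipschitzWith.continuous (K := ⟨lam⁻¹, inv_nonneg.2 hlam0.le⟩)
    intro u v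
    rw [edist_dist, edist_dist, Real.dist_eq, Real.dist_eq]
    calc (ENNReal.ofReal |Finv u - Finv v|) ≤ ENNReal.ofReal (lam⁻¹ * |u - v|) :=
          ENNReal.ofReal_le_ofReal (hFinvLip u v)
      _ = _ := by
          rw [ENNReal.ofReal_mul (inv_nonneg.2 hlam0.le)]
          congr 1
          rw [ENNReal.ofReal, Real.toNNReal_of_nonneg (inv_nonneg.2 hlam0.le)]; rfl
  -- Finv (y + d) = Finv y + 1
  have hFinvper : ∀ y, Finv (y + d) = Finv y + 1 := by
    intro y
    have : F (Finv y + 1) = y + d := by rw [hFper, hFinv₂]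
    calc Finv (y + d) = Finv (F (Finv y + 1)) := by rw [this]
      _ = Finv y + 1 := hFinv₁ _
  -- h₀ = Finv ∘ G - id is 1-periodic continuous, hence bounded
  obtain ⟨C₀, hC₀0, hC₀⟩ : ∃ C, 0 ≤ C ∧ ∀ x, |Finv (G x) - x| ≤ C := by
    apply periodic_bounded ((hFinvCont.comp hGcont).sub continuous_id)
    intro x
    show Finv (G (x + 1)) - (x + 1) = Finv (G x) - x
    rw [hGper, hFinvper]
    ring
  -- The contraction operator on bounded continuous functions
  set K : NNReal := ⟨lam⁻¹, inv_nonneg.2 hlam0.le⟩ with hK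
  have hKlt : K < 1 := by
    rw [← NNReal.coe_lt_coe, NNReal.coe_one]
    exact inv_lt_one_of_one_lt₀ hlam
  set T : (ℝ →ᵇ ℝ) → (ℝ →ᵇ ℝ) := fun ψ =>
    BoundedContinuousFunction.ofNormedAddCommGroup
      (fun x => Finv (G x + ψ (G x)) - x)
      (by
        apply Continuous.sub _ continuous_id
        exact hFinvCont.comp ((hGcont.add (ψ.continuous.comp hGcont)))
      )
      (lam⁻¹ * ‖ψ‖ + C₀)
      (by
        intro x
        have h1 : |Finv (G x + ψ (G x)) - Finv (G x)| ≤ lam⁻¹ * ‖ψ‖ := by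
          calc |Finv (G x + ψ (G x)) - Finv (G x)| ≤ lam⁻¹ * |G x + ψ (G x) - G x| :=
                hFinvLip _ _
            _ = lam⁻¹ * |ψ (G x)| := by ring_nf
            _ ≤ lam⁻¹ * ‖ψ‖ := by
                apply mul_le_mul_of_nonneg_left _ (inv_nonneg.2 hlam0.le)
                exact ψ.norm_coe_le_norm (G x)
        have h2 := hC₀ x
        calc ‖Finv (G x + ψ (G x)) - x‖
            = |(Finv (G x + ψ (G x)) - Finv (G x)) + (Finv (G x) - x)| := by
              rw [Real.norm_eq_abs]; ring_nf
          _ ≤ |Finv (G x + ψ (G x)) - Finv (G x)| + |Finv (G x) - x| := abs_add_le _ _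
          _ ≤ lam⁻¹ * ‖ψ‖ + C₀ := add_le_add h1 h2
      ) with hT
  have hTapp : ∀ ψ : ℝ →ᵇ ℝ, ∀ x, T ψ x = Finv (G x + ψ (G x)) - x := fun ψ x => rfl
  have hTcontr : ContractingWith K T := by
    constructor
    · exact hKlt
    · apply LipschitzWith.of_dist_le_mul
      intro ψ₁ ψ₂
      apply (BoundedContinuousFunction.dist_le (by positivity)).2
      intro x
      rw [hTapp, hTapp]
      have : dist (Finv (G x + ψ₁ (G x)) - x) (Finv (G x + ψ₂ (G x)) - x)
          = |Finv (G x + ψ₁ (G x)) - Finv (G x + ψ₂ (G x))| := by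
        rw [Real.dist_eq]; ring_nf
      rw [this]
      calc |Finv (G x + ψ₁ (G x)) - Finv (G x + ψ₂ (G x))|
          ≤ lam⁻¹ * |G x + ψ₁ (G x) - (G x + ψ₂ (G x))| := hFinvLip _ _
        _ = lam⁻¹ * dist (ψ₁ (G x)) (ψ₂ (G x)) := by rw [Real.dist_eq]; ring_nf
        _ ≤ K * dist ψ₁ ψ₂ := by
            apply mul_le_mul_of_nonneg_left _ (inv_nonneg.2 hlam0.le)
            exact BoundedContinuousFunction.dist_coe_le_dist (G x)
  set ψ₀ : ℝ →ᵇ ℝ := hTcontr.fixedPoint T with hψ₀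
  have hfix : T ψ₀ = ψ₀ := hTcontr.fixedPoint_isFixedPt
  -- ψ₀ is 1-periodic
  have hS : IsClosed {ψ : ℝ →ᵇ ℝ | ∀ x, ψ (x + 1) = ψ x} := by
    have : {ψ : ℝ →ᵇ ℝ | ∀ x, ψ (x + 1) = ψ x}
        = ⋂ x : ℝ, {ψ : ℝ →ᵇ ℝ | ψ (x + 1) = ψ x} := by
      ext ψ; simp [Set.mem_iInter]
    rw [this]
    apply isClosed_iInter
    intro x
    exact isClosed_eq
      (continuous_eval_const (x + 1)) (continuous_eval_const x)
  have hTS : ∀ ψ : ℝ →ᵇ ℝ, (∀ x, ψ (x + 1) = ψ x) → ∀ x, T ψ (x + 1) = T ψ x := by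
    intro ψ hψ x
    rw [hTapp, hTapp, hGper]
    have : G x + (d:ℝ) + ψ (G x + d) = G x + ψ (G x) + d := by
      have : ψ (G x + d) = ψ (G x) := by
        have hper : Function.Periodic (fun y => ψ y) 1 := hψ
        have := hper.sub_int_mul_eq (x := G x + d) (n := d)
        simpa using this.symm
      rw [this]; ring
    rw [this, hFinvper]
    ring
  have hψ₀per : ∀ x, ψ₀ (x + 1) = ψ₀ x := by
    have hmem : ψ₀ ∈ {ψ : ℝ →ᵇ ℝ | ∀ x, ψ (x + 1) = ψ x} := by
      apply hS.mem_of_tendsto (hTcontr.tendsto_iterate_fixedPoint 0)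
      apply Filter.Eventually.of_forall
      intro n
      induction n with
      | zero => simp [Function.iterate_zero]
      | succ n ih =>
        rw [Function.iterate_succ_apply']
        exact hTS _ ih
    exact hmem
  -- the conjugacy H
  set H : ℝ → ℝ := fun x => x + ψ₀ x with hH
  have hHcont : Continuous H := continuous_id.add ψ₀.continuous
  have hHper : ∀ x, H (x + 1) = H x + 1 := by
    intro x; simp only [hH, hψ₀per]; ring
  have hHfix : ∀ x, Finv (H (G x)) = H x := by
    intro x
    have := congrArg (fun ψ : ℝ →ᵇ ℝ => ψ x) hfix
    simp only [hTapp] at this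
    simp only [hH]
    linarith [this]
  constructor
  · refine ⟨H, ⟨hHcont, hHper, hHfix⟩, ?_⟩
    rintro H' ⟨hH'cont, hH'per, hH'fix⟩
    -- H' - id is a bounded continuous periodic function fixed by T
    obtain ⟨C₁, hC₁0, hC₁⟩ : ∃ C, 0 ≤ C ∧ ∀ x, |H' x - x| ≤ C := by
      apply periodic_bounded (hH'cont.sub continuous_id)
      intro x
      show H' (x + 1) - (x + 1) = H' x - x
      rw [hH'per]; ring
    set ψ' : ℝ →ᵇ ℝ := BoundedContinuousFunction.ofNormedAddCommGroup
      (fun x => H' x - x) (hH'cont.sub continuous_id) C₁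
      (fun x => by rw [Real.norm_eq_abs]; exact hC₁ x) with hψ'
    have hψ'fix : Function.IsFixedPt T ψ' := by
      apply BoundedContinuousFunction.ext
      intro x
      rw [hTapp]
      show Finv (G x + (H' (G x) - G x)) - x = H' x - x
      rw [show G x + (H' (G x) - G x) = H' (G x) by ring, hH'fix]
    have := hTcontr.fixedPoint_unique hψ'fix
    funext x
    have hx := congrArg (fun ψ : ℝ →ᵇ ℝ => ψ x) this
    have : H' x - x = ψ₀ x := hx
    simp only [hH]
    linarith
  · intro H' _ _ hfix' x
    rw [← hfix' x, hFinv₂]
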